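/- Let g > 0, h₅ > 0, u_A ∈ ℝ, h_A > 0 be constants and let x̂, t̂ ∈ ℝ. Suppose on an open interval J ⊂ (t̂, ∞) there are differentiable functions x(t), u(t), h(t) with h(t) > 0 satisfying: x'(t) = u − √((g/2)(h + h₅) h₅ / h) (the 1-shock speed against the state of depth h₅); x(t) − x̂ = (u − √(g h))(t − t̂) (the shock point lies on the 1-characteristic of the centered rarefaction fan centered at (x̂, t̂)); and u + 2√(g h) = u_A + 2√(g h_A) (constancy of the 1-Riemann invariant across the rarefaction). Then h satisfies the ODE h'(t) = −(2 / (3(t − t̂))) · (h − √((h + h₅) h₅ / 2)) on J. -/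

import Mathlib

/-- ODE governing the depth ahead of a 1-shock penetrating a centered
1-rarefaction fan centered at `(x̂, t̂)`: if on an open interval
`J = (t₁,t₂) ⊂ (t̂,∞)` the differentiable functions `x, u, h` (with `h > 0`)
satisfy the shock-speed relation `x' = u − √((g/2)(h+h₅)h₅/h)`, the fan
relation `x − x̂ = (u − √(gh))(t − t̂)`, and the invariant relation
`u + 2√(gh) = u_A + 2√(gh_A)`, then
`h' = −(2/(3(t−t̂)))·(h − √((h+h₅)h₅/2))` on `J`. -/
theorem stmt_17 (g h₅ uA hA xhat that t₁ t₂ : ℝ) (hg : 0 < g) (hh₅ : 0 < h₅)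
    (hhA : 0 < hA) (ht₁ : that ≤ t₁)
    (x u h : ℝ → ℝ)
    (hdiff : ∀ t ∈ Set.Ioo t₁ t₂, DifferentiableAt ℝ x t
      ∧ DifferentiableAt ℝ u t ∧ DifferentiableAt ℝ h t)
    (hpos : ∀ t ∈ Set.Ioo t₁ t₂, 0 < h t)
    (hspeed : ∀ t ∈ Set.Ioo t₁ t₂,
      deriv x t = u t - Real.sqrt (g / 2 * (h t + h₅) * h₅ / h t))
    (hchar : ∀ t ∈ Set.Ioo t₁ t₂,
      x t - xhat = (u t - Real.sqrt (g * h t)) * (t - that))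
    (hinv : ∀ t ∈ Set.Ioo t₁ t₂,
      u t + 2 * Real.sqrt (g * h t) = uA + 2 * Real.sqrt (g * hA)) :
    ∀ t ∈ Set.Ioo t₁ t₂,
      deriv h t = -(2 / (3 * (t - that)))
        * (h t - Real.sqrt ((h t + h₅) * h₅ / 2)) := by
  intro t htJ
  obtain ⟨hx, hu, hh⟩ := hdiff t htJ
  have hht : 0 < h t := hpos t htJ
  have htt : that < t := lt_of_le_of_lt ht₁ htJ.1
  have hmem : Set.Ioo t₁ t₂ ∈ nhds t := isOpen_Ioo.mem_nhds htJ
  set c : ℝ := Real.sqrt (g * h t) with hc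
  have hcpos : 0 < c := Real.sqrt_pos.mpr (mul_pos hg hht)
  have hc2 : c ^ 2 = g * h t := Real.sq_sqrt (mul_pos hg hht).le
  -- derivative of s ↦ √(g * h s)
  have hgh : HasDerivAt (fun s => g * h s) (g * deriv h t) t := (hh.hasDerivAt).const_mul g
  have hcder : HasDerivAt (fun s => Real.sqrt (g * h s)) (g * deriv h t / (2 * c)) t := by
    have := (Real.hasDerivAt_sqrt (ne_of_gt (mul_pos hg hht))).comp t hgh
    exact this.congr_deriv (by rw [hc]; ring)
  -- invariant gives u' = -2 c'
  have hF : HasDerivAt (fun s => u s + 2 * Real.sqrt (g * h s))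
      (deriv u t + 2 * (g * deriv h t / (2 * c))) t :=
    (hu.hasDerivAt).add ((hcder).const_mul 2)
  have hFc : HasDerivAt (fun s => u s + 2 * Real.sqrt (g * h s)) 0 t := by
    apply (hasDerivAt_const t (uA + 2 * Real.sqrt (g * hA))).congr_of_eventuallyEq
    exact Filter.eventually_of_mem hmem hinv
  have hinv' : deriv u t + 2 * (g * deriv h t / (2 * c)) = 0 := hF.unique hFc
  -- characteristic gives x'
  have hG : HasDerivAt (fun s => xhat + (u s - Real.sqrt (g * h s)) * (s - that))
      ((deriv u t - g * deriv h t / (2 * c)) * (t - that)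
        + (u t - c) * 1) t := by
    have := (hasDerivAt_const t xhat).add
      (((hu.hasDerivAt).sub hcder).mul ((hasDerivAt_id t).sub (hasDerivAt_const t that)))
    exact this.congr_deriv (by simp only [Pi.sub_apply, id, hc]; ring)
  have hxG : HasDerivAt x ((deriv u t - g * deriv h t / (2 * c)) * (t - that)
        + (u t - c) * 1) t := by
    apply hG.congr_of_eventuallyEq
    filter_upwards [hmem] with s hs
    have := hchar s hs
    linarith
  have hxderiv : deriv x t = (deriv u t - g * deriv h t / (2 * c)) * (t - that)
        + (u t - c) * 1 := hxG.deriv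
  have hsp := hspeed t htJ
  -- rewrite the shock-speed sqrt
  set S : ℝ := Real.sqrt ((h t + h₅) * h₅ / 2) with hS
  have hS2 : S ^ 2 = (h t + h₅) * h₅ / 2 := Real.sq_sqrt (by positivity)
  have hS1 : Real.sqrt (g / 2 * (h t + h₅) * h₅ / h t) = c * S / h t := by
    rw [show g / 2 * (h t + h₅) * h₅ / h t = (c * S / h t) ^ 2 by
      rw [div_pow, mul_pow, hc2, hS2]; field_simp]
    exact Real.sqrt_sq (by positivity)
  rw [hxderiv, hS1] at hsp
  -- now pure algebra
  have hne : t - that ≠ 0 := sub_ne_zero.mpr htt.ne'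
  have hu' : deriv u t = -(g * deriv h t / c) := by
    field_simp at hinv' ⊢
    linarith
  rw [hu'] at hsp
  field_simp at hsp ⊢
  have key : c ^ 3 * (deriv h t * (t - that) * 3) = c ^ 3 * (-(2 * (h t - S))) := by
    linear_combination (-c) * hsp + (3 * c * deriv h t * (t - that)) * hc2
  exact mul_left_cancel₀ (pow_ne_zero 3 hcpos.ne') key
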